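/- Let $c > 0$ and let $h$ be a positive integer. Suppose $\mu$ is a Borel probability measure on $\mathbb{R}$ such that $\int x^k\,d\mu(x) = \frac{c^k}{(k+1)^{h/2}}$ for all integers $k\ge 0$. Then $\mu$ is absolutely continuous with density $\rho_{c,h}(x) = \frac{1}{c\,\Gamma(h/2)}\,\chi_{(0,c)}(x)\,(\log(c/x))^{h/2-1}$; i.e., $\mu = \rho_{c,h}(x)\,dx$. -/

import Mathlib

open MeasureTheory Real Set
open scoped ENNReal NNReal BoundedContinuousFunction

lemma aux_image (c : ℝ) (hc : 0 < c) :
    (fun t : ℝ => c * Real.exp (-t)) '' Set.Ioi 0 = Set.Ioo 0 c := by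
  ext y
  constructor
  · rintro ⟨t, ht, rfl⟩
    have h1 : Real.exp (-t) < 1 := Real.exp_lt_one_iff.2 (by simpa using ht)
    have h2 : 0 < Real.exp (-t) := Real.exp_pos _
    refine ⟨by positivity, ?_⟩
    show c * Real.exp (-t) < c
    nlinarith
  · rintro ⟨hy1, hy2⟩
    refine ⟨Real.log (c / y), Real.log_pos ((one_lt_div hy1).2 hy2), ?_⟩
    show c * Real.exp (-(Real.log (c / y))) = y
    rw [Real.exp_neg, Real.exp_log (by positivity)]
    field_simp

lemma aux_deriv (c : ℝ) (t : ℝ) :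
    HasDerivAt (fun t : ℝ => c * Real.exp (-t)) (-(c * Real.exp (-t))) t := by
  have h : HasDerivAt (fun t : ℝ => Real.exp (-t)) (Real.exp (-t) * (-1)) t :=
    (Real.hasDerivAt_exp (-t)).comp t (hasDerivAt_neg t)
  have := h.const_mul c
  rw [show -(c * Real.exp (-t)) = c * (Real.exp (-t) * -1) by ring]
  exact this

lemma aux_inj (c : ℝ) (hc : 0 < c) :
    Set.InjOn (fun t : ℝ => c * Real.exp (-t)) (Set.Ioi 0) := by
  intro a _ b _ hab
  have h := mul_left_cancel₀ hc.ne' hab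
  have := Real.exp_injective h
  linarith

lemma aux_simp (c : ℝ) (hc : 0 < c) (s : ℝ) (k : ℕ) (t : ℝ) :
    |(-(c * Real.exp (-t)))| • ((c * Real.exp (-t)) ^ k *
        Real.log (c / (c * Real.exp (-t))) ^ (s - 1))
      = c ^ (k + 1) * (t ^ (s - 1) * Real.exp (-((k : ℝ) + 1) * t)) := by
  have h2 : (0:ℝ) < Real.exp (-t) := Real.exp_pos _
  have h1 : c / (c * Real.exp (-t)) = Real.exp t := by
    rw [Real.exp_neg]; field_simp
  rw [h1, Real.log_exp, abs_neg, abs_of_pos (by positivity), smul_eq_mul]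
  have h3 : Real.exp (-t) ^ (k + 1) = Real.exp (-((k : ℝ) + 1) * t) := by
    rw [← Real.exp_nat_mul]
    push_cast
    ring_nf
  rw [mul_pow]
  calc c * Real.exp (-t) * (c ^ k * Real.exp (-t) ^ k * t ^ (s-1))
      = c ^ (k+1) * (t ^ (s-1) * Real.exp (-t) ^ (k+1)) := by ring
    _ = _ := by rw [h3]

lemma aux_gamma (s : ℝ) (hs : 0 < s) (k : ℕ) :
    ∫ t in Set.Ioi (0:ℝ), t ^ (s - 1) * Real.exp (-((k : ℝ) + 1) * t)
      = ((k : ℝ) + 1) ^ (-s) * Real.Gamma s := by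
  have hb : (0:ℝ) < (k : ℝ) + 1 := by positivity
  have := integral_rpow_mul_exp_neg_mul_rpow (p := 1) (q := s - 1) (b := (k:ℝ)+1)
    one_pos (by linarith) hb
  simp only [Real.rpow_one, sub_add_cancel, div_one] at this
  rw [this]; ring

lemma aux_gamma_int (s : ℝ) (hs : 0 < s) (k : ℕ) :
    IntegrableOn (fun t : ℝ => t ^ (s - 1) * Real.exp (-((k : ℝ) + 1) * t)) (Set.Ioi 0) := by
  have hb : (0:ℝ) < (k : ℝ) + 1 := by positivity
  have := integrableOn_rpow_mul_exp_neg_mul_rpow (p := 1) (s := s - 1) (b := (k:ℝ)+1)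
    (by linarith) one_pos hb
  simpa using this

lemma aux_int (c : ℝ) (hc : 0 < c) (s : ℝ) (hs : 0 < s) (k : ℕ) :
    IntegrableOn (fun x : ℝ => x ^ k * Real.log (c / x) ^ (s - 1)) (Set.Ioo 0 c) ∧
    ∫ x in Set.Ioo 0 c, x ^ k * Real.log (c / x) ^ (s - 1)
      = c ^ (k + 1) * (((k : ℝ) + 1) ^ (-s) * Real.Gamma s) := by
  have hderiv : ∀ t ∈ Set.Ioi (0:ℝ), HasDerivWithinAt (fun t : ℝ => c * Real.exp (-t))
      (-(c * Real.exp (-t))) (Set.Ioi 0) t := fun t _ => (aux_deriv c t).hasDerivWithinAt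
  have hinj := aux_inj c hc
  have himg := aux_image c hc
  constructor
  · rw [← himg, integrableOn_image_iff_integrableOn_abs_deriv_smul measurableSet_Ioi hderiv hinj]
    have h1 : IntegrableOn (fun t : ℝ => c ^ (k+1) *
        (t ^ (s - 1) * Real.exp (-((k : ℝ) + 1) * t))) (Set.Ioi 0) :=
      (aux_gamma_int s hs k).const_mul _
    exact h1.congr_fun (fun t _ => (aux_simp c hc s k t).symm) measurableSet_Ioi
  · calc ∫ x in Set.Ioo 0 c, x ^ k * Real.log (c / x) ^ (s - 1)
        = ∫ t in Set.Ioi (0:ℝ), |(-(c * Real.exp (-t)))| • ((c * Real.exp (-t)) ^ k *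
            Real.log (c / (c * Real.exp (-t))) ^ (s - 1)) := by
          rw [← himg]
          exact integral_image_eq_integral_abs_deriv_smul measurableSet_Ioi hderiv hinj _
      _ = ∫ t in Set.Ioi (0:ℝ), c ^ (k+1) * (t ^ (s - 1) * Real.exp (-((k : ℝ) + 1) * t)) :=
          setIntegral_congr_fun measurableSet_Ioi fun t _ => aux_simp c hc s k t
      _ = c ^ (k+1) * ∫ t in Set.Ioi (0:ℝ), t ^ (s - 1) * Real.exp (-((k : ℝ) + 1) * t) :=
          MeasureTheory.integral_const_mul _ _
      _ = _ := by rw [aux_gamma s hs k]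

lemma aux_rho_meas (c : ℝ) (hc : 0 < c) (s : ℝ) :
    Measurable (fun x : ℝ => Set.indicator (Set.Ioo 0 c)
      (fun x => (1 / (c * Real.Gamma s)) * Real.log (c / x) ^ (s - 1)) x) := by
  have heq : Set.indicator (Set.Ioo 0 c)
      (fun x => (1 / (c * Real.Gamma s)) * Real.log (c / x) ^ (s - 1))
      = Set.indicator (Set.Ioo 0 c)
      (fun x => (1 / (c * Real.Gamma s)) * Real.exp (Real.log (Real.log (c / x)) * (s - 1))) := by
    apply Set.indicator_congr
    intro x hx
    simp only []
    rw [Real.rpow_def_of_pos (Real.log_pos ((one_lt_div hx.1).2 hx.2))]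
  rw [heq]
  apply Measurable.indicator _ measurableSet_Ioo
  exact measurable_const.mul
    (Real.measurable_exp.comp ((Real.measurable_log.comp
      (Real.measurable_log.comp (measurable_const.div measurable_id))).mul measurable_const))

lemma aux_rho_nonneg (c : ℝ) (hc : 0 < c) (s : ℝ) (hΓ : 0 < Real.Gamma s) (x : ℝ) :
    0 ≤ Set.indicator (Set.Ioo 0 c)
      (fun x => (1 / (c * Real.Gamma s)) * Real.log (c / x) ^ (s - 1)) x := by
  apply Set.indicator_nonneg
  intro y hy
  have h1 : 0 < Real.log (c / y) := Real.log_pos ((one_lt_div hy.1).2 hy.2)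
  positivity

lemma aux_indicator_mul (c : ℝ) (s A : ℝ) (k : ℕ) (x : ℝ) :
    Set.indicator (Set.Ioo 0 c) (fun x => A * Real.log (c / x) ^ (s - 1)) x * x ^ k
      = Set.indicator (Set.Ioo 0 c) (fun x => A * (x ^ k * Real.log (c / x) ^ (s - 1))) x := by
  by_cases hx : x ∈ Set.Ioo 0 c
  · simp [hx]; ring
  · simp [hx]

lemma aux_nu_int (c : ℝ) (hc : 0 < c) (s : ℝ) (hs : 0 < s) (k : ℕ) :
    Integrable (fun x : ℝ => Set.indicator (Set.Ioo 0 c)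
      (fun x => (1 / (c * Real.Gamma s)) * (x ^ k * Real.log (c / x) ^ (s - 1))) x) := by
  apply (IntegrableOn.integrable_indicator _ measurableSet_Ioo)
  exact (aux_int c hc s hs k).1.const_mul _

lemma aux_nu_mom (c : ℝ) (hc : 0 < c) (s : ℝ) (hs : 0 < s) (k : ℕ) :
    ∫ x, x ^ k ∂(volume.withDensity fun x => ENNReal.ofReal
      (Set.indicator (Set.Ioo 0 c)
        (fun x => (1 / (c * Real.Gamma s)) * Real.log (c / x) ^ (s - 1)) x))
      = c ^ k / (((k : ℝ) + 1) ^ s) := by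
  set ρ : ℝ → ℝ := fun x => Set.indicator (Set.Ioo 0 c)
      (fun x => (1 / (c * Real.Gamma s)) * Real.log (c / x) ^ (s - 1)) x with hρ
  have hΓ : 0 < Real.Gamma s := Real.Gamma_pos_of_pos hs
  have hmeas : Measurable fun x => (ρ x).toNNReal :=
    (aux_rho_meas c hc s).real_toNNReal
  have h0 : (volume.withDensity fun x => ENNReal.ofReal (ρ x))
      = volume.withDensity fun x => ((fun x => (ρ x).toNNReal) x : ℝ≥0∞) := rfl
  rw [h0, integral_withDensity_eq_integral_smul hmeas]
  have h1 : ∀ x : ℝ, (fun x => (ρ x).toNNReal) x • x ^ k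
      = Set.indicator (Set.Ioo 0 c)
        (fun x => (1 / (c * Real.Gamma s)) * (x ^ k * Real.log (c / x) ^ (s - 1))) x := by
    intro x
    rw [NNReal.smul_def, Real.coe_toNNReal _ (aux_rho_nonneg c hc s hΓ x)]
    exact aux_indicator_mul c s _ k x
  rw [show (fun x : ℝ => (fun x => (ρ x).toNNReal) x • x ^ k) = _ from funext h1,
    integral_indicator measurableSet_Ioo, MeasureTheory.integral_const_mul,
    (aux_int c hc s hs k).2]
  rw [Real.rpow_neg (by positivity)]
  have hne : ((k : ℝ) + 1) ^ s ≠ 0 := by positivity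
  field_simp
  ring

lemma aux_supp (c : ℝ) (hc : 0 < c) (s : ℝ) (hs : 0 < s)
    (μ : Measure ℝ) [IsProbabilityMeasure μ]
    (hmom : ∀ k : ℕ, ∫ x, x ^ k ∂μ = c ^ k / (((k : ℝ) + 1) ^ s)) :
    μ (Set.Icc (-c) c)ᶜ = 0 := by
  have hint : ∀ k : ℕ, Integrable (fun x : ℝ => x ^ k) μ := by
    intro k
    by_contra hni
    have h0 := integral_undef hni
    rw [hmom k] at h0
    have hpos : (0:ℝ) < c ^ k / (((k : ℝ) + 1) ^ s) := by positivity
    linarith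
  have key : ∀ t : ℝ, c < t → μ {x : ℝ | t ≤ |x|} = 0 := by
    intro t ht
    have ht0 : 0 < t := lt_trans hc ht
    set m : ℝ := (μ {x : ℝ | t ≤ |x|}).toReal with hm
    have hbound : ∀ k : ℕ, m ≤ ((c / t) ^ 2) ^ k := by
      intro k
      have hnn : (0:ℝ→ℝ) ≤ᵐ[μ] fun x : ℝ => x ^ (2 * k) :=
        ae_of_all μ fun x => by simp only [Pi.zero_apply]; exact (even_two_mul k).pow_nonneg x
      have hcheb := mul_meas_ge_le_integral_of_nonneg hnn (hint (2 * k)) (t ^ (2 * k))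
      rw [hmom (2 * k)] at hcheb
      have hsub : {x : ℝ | t ≤ |x|} ⊆ {x : ℝ | t ^ (2 * k) ≤ x ^ (2 * k)} := by
        intro x hx
        have h1 : t ^ (2 * k) ≤ |x| ^ (2 * k) := pow_le_pow_left₀ ht0.le hx _
        have h2 : |x| ^ (2 * k) = x ^ (2 * k) := by
          rw [pow_abs, abs_of_nonneg ((even_two_mul k).pow_nonneg x)]
        rwa [h2] at h1
      have hmono : m ≤ (μ {x : ℝ | t ^ (2 * k) ≤ x ^ (2 * k)}).toReal :=
        ENNReal.toReal_mono (measure_ne_top μ _) (measure_mono hsub)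
      have hle : c ^ (2 * k) / (((2 * k : ℕ) : ℝ) + 1) ^ s ≤ c ^ (2 * k) := by
        apply div_le_self (by positivity)
        apply Real.one_le_rpow (by push_cast; linarith) (le_of_lt hs)
      have h3 : t ^ (2 * k) * m ≤ c ^ (2 * k) := by
        calc t ^ (2 * k) * m ≤ t ^ (2 * k) * (μ {x : ℝ | t ^ (2 * k) ≤ x ^ (2 * k)}).toReal :=
              mul_le_mul_of_nonneg_left hmono (by positivity)
          _ ≤ c ^ (2 * k) / (((2 * k : ℕ) : ℝ) + 1) ^ s := hcheb
          _ ≤ c ^ (2 * k) := hle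
      have h4 : m ≤ (c / t) ^ (2 * k) := by
        rw [div_pow, le_div_iff₀ (by positivity), mul_comm]
        exact h3
      rwa [pow_mul] at h4
    have hlim : Filter.Tendsto (fun k : ℕ => ((c / t) ^ 2) ^ k) Filter.atTop (nhds 0) := by
      apply tendsto_pow_atTop_nhds_zero_of_lt_one (by positivity)
      have h5 : c / t < 1 := (div_lt_one ht0).2 ht
      nlinarith [div_pos hc ht0]
    have hm0 : m ≤ 0 := ge_of_tendsto' hlim hbound
    have : m = 0 := le_antisymm hm0 ENNReal.toReal_nonneg
    rcases (ENNReal.toReal_eq_zero_iff _).1 this with h | h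
    · exact h
    · exact absurd h (measure_ne_top μ _)
  have hsub : (Set.Icc (-c) c)ᶜ ⊆ ⋃ n : ℕ, {x : ℝ | c + 1 / ((n : ℝ) + 1) ≤ |x|} := by
    intro x hx
    have hx' : c < |x| := by
      by_contra hle
      exact hx (abs_le.1 (not_lt.1 hle))
    obtain ⟨n, hn⟩ := exists_nat_one_div_lt (sub_pos.2 hx')
    exact Set.mem_iUnion.2 ⟨n, by simp only [Set.mem_setOf_eq]; linarith⟩
  refine measure_mono_null hsub (measure_iUnion_null fun n => key _ ?_)
  have : (0:ℝ) < 1 / ((n : ℝ) + 1) := by positivity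
  linarith


/-- Moment determinacy: a Borel probability measure on `ℝ` whose `k`-th moments are
`c^k/(k+1)^{h/2}` must be the measure with density
`ρ_{c,h}(x) = (1/(c Γ(h/2))) χ_{(0,c)}(x) (log (c/x))^{h/2-1}`. -/
theorem moment_lemma
    (c : ℝ) (hc : 0 < c) (h : ℕ) (hh : 0 < h)
    (μ : Measure ℝ) [IsProbabilityMeasure μ]
    (hmom : ∀ k : ℕ, ∫ x, x ^ k ∂μ = c ^ k / ((k + 1 : ℝ) ^ ((h : ℝ) / 2))) :
    μ = volume.withDensity fun x => ENNReal.ofReal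
      (Set.indicator (Set.Ioo 0 c)
        (fun x => (1 / (c * Real.Gamma ((h : ℝ) / 2))) *
          Real.log (c / x) ^ ((h : ℝ) / 2 - 1)) x) := by
  set s : ℝ := (h : ℝ) / 2 with hsdef
  have hs : 0 < s := by positivity
  have hΓ : 0 < Real.Gamma s := Real.Gamma_pos_of_pos hs
  set ρ : ℝ → ℝ := fun x => Set.indicator (Set.Ioo 0 c)
      (fun x => (1 / (c * Real.Gamma s)) * Real.log (c / x) ^ (s - 1)) x with hρ
  set ν : Measure ℝ := volume.withDensity fun x => ENNReal.ofReal (ρ x) with hν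
  have hρmeas : Measurable ρ := aux_rho_meas c hc s
  have hρnonneg : ∀ x, 0 ≤ ρ x := aux_rho_nonneg c hc s hΓ
  have hρint : Integrable ρ := by
    refine (aux_nu_int c hc s hs 0).congr (ae_of_all _ fun x => ?_)
    rw [hρ]
    by_cases hx : x ∈ Set.Ioo 0 c <;> simp [hx]
  have hνfin : IsFiniteMeasure ν := isFiniteMeasure_withDensity_ofReal hρint.2
  have hνmom : ∀ k : ℕ, ∫ x, x ^ k ∂ν = c ^ k / (((k : ℝ) + 1) ^ s) := fun k =>
    aux_nu_mom c hc s hs k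
  have hνint : ∀ k : ℕ, Integrable (fun x : ℝ => x ^ k) ν := by
    intro k
    rw [hν,
      show (fun x => ENNReal.ofReal (ρ x)) = fun x => (((fun y => (ρ y).toNNReal)) x : ℝ≥0∞) from rfl,
      integrable_withDensity_iff_integrable_smul hρmeas.real_toNNReal]
    refine (aux_nu_int c hc s hs k).congr (ae_of_all _ fun x => ?_)
    simp only [NNReal.smul_def, Real.coe_toNNReal _ (hρnonneg x)]
    exact (aux_indicator_mul c s _ k x).symm
  have hint : ∀ k : ℕ, Integrable (fun x : ℝ => x ^ k) μ := by
    intro k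
    by_contra hni
    have h0 := integral_undef hni
    rw [hmom k] at h0
    have hpos : (0:ℝ) < c ^ k / (((k : ℝ) + 1) ^ s) := by positivity
    rw [hsdef] at hpos
    push_cast at h0 hpos
    linarith
  have hμK : μ (Set.Icc (-c) c)ᶜ = 0 := aux_supp c hc s hs μ hmom
  have hνK : ν (Set.Icc (-c) c)ᶜ = 0 := by
    rw [hν, withDensity_apply _ measurableSet_Icc.compl]
    rw [setLIntegral_congr_fun measurableSet_Icc.compl
      ((fun x hx => show ENNReal.ofReal (ρ x) = (fun _ => (0:ℝ≥0∞)) x by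
        have hxnot : x ∉ Set.Ioo 0 c := fun hmem =>
          hx ⟨by linarith [hmem.1], le_of_lt hmem.2⟩
        rw [hρ]
        simp [Set.indicator_of_notMem hxnot]))]
    simp
  have hcompl : {a : ℝ | ¬ a ∈ Set.Icc (-c) c} = (Set.Icc (-c) c)ᶜ := rfl
  have hμae : ∀ᵐ x ∂μ, x ∈ Set.Icc (-c) c := by
    rw [ae_iff, hcompl]; exact hμK
  have hνae : ∀ᵐ x ∂ν, x ∈ Set.Icc (-c) c := by
    rw [ae_iff, hcompl]; exact hνK
  have hpoly : ∀ p : Polynomial ℝ, ∫ x, p.eval x ∂μ = ∫ x, p.eval x ∂ν := by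
    intro p
    have hev : ∀ x : ℝ, p.eval x
        = ∑ i ∈ Finset.range (p.natDegree + 1), p.coeff i * x ^ i := fun x =>
      Polynomial.eval_eq_sum_range x
    simp_rw [hev]
    rw [integral_finset_sum _ (fun i _ => (hint i).const_mul _),
      integral_finset_sum _ (fun i _ => (hνint i).const_mul _)]
    refine Finset.sum_congr rfl fun i _ => ?_
    rw [MeasureTheory.integral_const_mul, MeasureTheory.integral_const_mul, hmom i, hνmom i]
  have core : ∀ G : ℝ →ᵇ ℝ, ∫ x, G x ∂μ = ∫ x, G x ∂ν := by
    intro G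
    have hGμ : Integrable (⇑G) μ := G.integrable μ
    have hGν : Integrable (⇑G) ν := G.integrable ν
    set M : ℝ := 1 + (ν Set.univ).toReal with hM
    have hMpos : 0 < M := by positivity
    have hbound : ∀ ε : ℝ, 0 < ε → |(∫ x, G x ∂μ) - ∫ x, G x ∂ν| ≤ ε * M := by
      intro ε hε
      obtain ⟨p, hp⟩ := exists_polynomial_near_of_continuousOn (-c) c G
        G.continuous.continuousOn ε hε
      have hpintμ : Integrable (fun x => p.eval x) μ := by
        have hev : ∀ x : ℝ, p.eval x
            = ∑ i ∈ Finset.range (p.natDegree + 1), p.coeff i * x ^ i := fun x =>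
          Polynomial.eval_eq_sum_range x
        simp_rw [hev]
        exact integrable_finset_sum _ (fun i _ => (hint i).const_mul _)
      have hpintν : Integrable (fun x => p.eval x) ν := by
        have hev : ∀ x : ℝ, p.eval x
            = ∑ i ∈ Finset.range (p.natDegree + 1), p.coeff i * x ^ i := fun x =>
          Polynomial.eval_eq_sum_range x
        simp_rw [hev]
        exact integrable_finset_sum _ (fun i _ => (hνint i).const_mul _)
      have h1 : |(∫ x, G x ∂μ) - ∫ x, p.eval x ∂μ| ≤ ε * (μ Set.univ).toReal := by
        rw [← integral_sub hGμ hpintμ, ← Real.norm_eq_abs]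
        apply norm_integral_le_of_norm_le_const
        filter_upwards [hμae] with x hx
        rw [Real.norm_eq_abs, abs_sub_comm]
        exact le_of_lt (hp x hx)
      have h2 : |(∫ x, G x ∂ν) - ∫ x, p.eval x ∂ν| ≤ ε * (ν Set.univ).toReal := by
        rw [← integral_sub hGν hpintν, ← Real.norm_eq_abs]
        apply norm_integral_le_of_norm_le_const
        filter_upwards [hνae] with x hx
        rw [Real.norm_eq_abs, abs_sub_comm]
        exact le_of_lt (hp x hx)
      have h3 := hpoly p
      have hμuniv : (μ Set.univ).toReal = 1 := by simp
      calc |(∫ x, G x ∂μ) - ∫ x, G x ∂ν|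
          = |((∫ x, G x ∂μ) - ∫ x, p.eval x ∂μ)
              - ((∫ x, G x ∂ν) - ∫ x, p.eval x ∂ν)| := by rw [h3]; ring_nf
        _ ≤ |(∫ x, G x ∂μ) - ∫ x, p.eval x ∂μ|
              + |(∫ x, G x ∂ν) - ∫ x, p.eval x ∂ν| := abs_sub _ _
        _ ≤ ε * (μ Set.univ).toReal + ε * (ν Set.univ).toReal := add_le_add h1 h2
        _ = ε * M := by rw [hμuniv, hM]; ring
    have hD : |(∫ x, G x ∂μ) - ∫ x, G x ∂ν| ≤ 0 := by
      refine le_of_forall_pos_le_add fun ε hε => ?_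
      have := hbound (ε / M) (by positivity)
      rw [div_mul_cancel₀ _ hMpos.ne'] at this
      linarith
    have := abs_nonpos_iff.1 hD
    linarith [sub_eq_zero.1 this]
  haveI := hνfin
  refine ext_of_forall_lintegral_eq_of_IsFiniteMeasure fun f => ?_
  rw [lintegral_coe_eq_integral _ (f.integrable_of_nnreal μ),
      lintegral_coe_eq_integral _ (f.integrable_of_nnreal ν)]
  congr 1
  have hcont : Continuous fun x : ℝ => (f x : ℝ) := NNReal.continuous_coe.comp f.continuous
  let G : ℝ →ᵇ ℝ := BoundedContinuousFunction.ofNormedAddCommGroup _ hcont ((nndist 0 f : ℝ≥0) : ℝ)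
    (fun x => by
      rw [Real.norm_eq_abs, abs_of_nonneg (f x).coe_nonneg]
      exact_mod_cast f.apply_le_nndist_zero x)
  exact core G
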